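/- Let A be an associative K-algebra, n ≥ 2, and M̃, Y ∈ A such that d·M̃ Yⁿ⁻¹ M̃ = e·Yⁿ M̃ + a·M̃ Yⁿ, where e = 1 - d and a, d ∈ K with (d, a) ≠ (1, 0). Then for all k ≥ 1: d_k·M̃ Y^{kn-1} M̃ = e_k·Y^{kn} M̃ - a_k·M̃ Y^{kn}, where e_k = eᵏ, a_k = (-a)ᵏ, and d_k = d·∑_{j=0}^{k-1} e^j(-a)^{k-1-j}. -/

import Mathlib

private lemma ymul {A : Type*} [Ring A] (Y z : A) (i j : ℕ) :
    Y ^ i * (Y ^ j * z) = Y ^ (i + j) * z := by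
  rw [← mul_assoc, ← pow_add]

private lemma helper {K : Type*} [Field K] {A : Type*} [Ring A] [Algebra K A]
    (a d e dk ek ak : K) (Mt Y : A) (p q : ℕ)
    (H : d • (Mt * Y ^ p * Mt) = e • (Y ^ (p + 1) * Mt) + a • (Mt * Y ^ (p + 1)))
    (G : dk • (Mt * Y ^ q * Mt) = ek • (Y ^ (q + 1) * Mt) - ak • (Mt * Y ^ (q + 1))) :
    (d * ek - a * dk) • (Mt * Y ^ (p + q + 1) * Mt)
      = (e * ek) • (Y ^ (p + q + 2) * Mt) - (-(a * ak)) • (Mt * Y ^ (p + q + 2)) := by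
  have hA : dk • ((d • (Mt * Y ^ p * Mt)) * (Y ^ q * Mt))
      = dk • ((e • (Y ^ (p + 1) * Mt) + a • (Mt * Y ^ (p + 1))) * (Y ^ q * Mt)) := by rw [H]
  have hB : d • ((Mt * Y ^ p) * (dk • (Mt * Y ^ q * Mt)))
      = d • ((Mt * Y ^ p) * (ek • (Y ^ (q + 1) * Mt) - ak • (Mt * Y ^ (q + 1)))) := by rw [G]
  have hC : e • (Y ^ (p + 1) * (dk • (Mt * Y ^ q * Mt)))
      = e • (Y ^ (p + 1) * (ek • (Y ^ (q + 1) * Mt) - ak • (Mt * Y ^ (q + 1)))) := by rw [G]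
  have hD : ak • ((d • (Mt * Y ^ p * Mt)) * Y ^ (q + 1))
      = ak • ((e • (Y ^ (p + 1) * Mt) + a • (Mt * Y ^ (p + 1))) * Y ^ (q + 1)) := by rw [H]
  simp only [smul_smul, mul_smul_comm, smul_mul_assoc, smul_add, smul_sub, add_mul, sub_mul,
    mul_add, mul_sub, mul_assoc, ymul, ← pow_add] at hA hB hC hD ⊢
  ring_nf at hA hB hC hD ⊢
  linear_combination (norm := module) hA - hB + hC + hD

theorem stmt9 {K : Type*} [Field K] {A : Type*} [Ring A] [Algebra K A]
    (a d : K) (hda : (d, a) ≠ ((1 : K), (0 : K))) (e : K) (he : e = 1 - d)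
    (n : ℕ) (hn : 2 ≤ n) (Mt Y : A)
    (hrel : d • (Mt * Y ^ (n - 1) * Mt) = e • (Y ^ n * Mt) + a • (Mt * Y ^ n)) :
    ∀ k : ℕ, 1 ≤ k →
      (d * ∑ j ∈ Finset.range k, e ^ j * (-a) ^ (k - 1 - j)) • (Mt * Y ^ (k * n - 1) * Mt)
        = (e ^ k) • (Y ^ (k * n) * Mt) - ((-a) ^ k) • (Mt * Y ^ (k * n)) := by
  obtain ⟨p, rfl⟩ : ∃ p, n = p + 1 := ⟨n - 1, by omega⟩
  have H : d • (Mt * Y ^ p * Mt) = e • (Y ^ (p + 1) * Mt) + a • (Mt * Y ^ (p + 1)) := by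
    simpa using hrel
  intro k hk
  induction k with
  | zero => omega
  | succ k ih =>
    rcases Nat.eq_zero_or_pos k with hk0 | hk0
    · subst hk0
      simpa using H
    · have G := ih hk0
      have h1 : 1 * 1 ≤ k * (p + 1) := Nat.mul_le_mul hk0 (Nat.le_add_left 1 p)
      obtain ⟨q, hq⟩ : ∃ q, k * (p + 1) = q + 1 := ⟨k * (p + 1) - 1, by omega⟩
      rw [hq] at G
      simp only [Nat.add_sub_cancel] at G
      have key := helper a d e _ (e ^ k) ((-a) ^ k) Mt Y p q H G
      have hexp : (k + 1) * (p + 1) = p + q + 2 := by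
        rw [add_mul, one_mul, hq]; omega
      rw [hexp]
      simp only [Nat.add_sub_cancel, show p + q + 2 - 1 = p + q + 1 by omega]
      convert key using 2
      · rw [Finset.sum_range_succ, Nat.sub_self, pow_zero, mul_one, mul_add]
        have hs : ∑ j ∈ Finset.range k, e ^ j * (-a) ^ (k - j)
            = (-a) * ∑ j ∈ Finset.range k, e ^ j * (-a) ^ (k - 1 - j) := by
          rw [Finset.mul_sum]
          apply Finset.sum_congr rfl
          intro j hj
          simp only [Finset.mem_range] at hj
          have hkj : k - j = (k - 1 - j) + 1 := by omega
          rw [hkj, pow_succ]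
          ring
        rw [hs]; ring
      · rw [pow_succ]; ring
      · rw [pow_succ]; ring
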